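/- Let {X_s} be Banach spaces and {Θ_s} λ_s-BK-spaces, both decreasing with increasing norms and dense intersections, with each Θ_s and Θ_s* a CB-space. Let {g_i} ⊂ X_F* be an F-Bessel sequence for X_F with respect to Θ_F, and suppose {f_i} ⊂ X_F is a DF-Bessel sequence for X_F* (i.e., a Θ_s*-Bessel sequence for X_s* for each s) such that f = ∑_i g_i(f) f_i in X_F for every f ∈ X_F. Then for every s and every f ∈ X_s, f = ∑_i g_i^s(f) f_i in X_s (where g_i^s is the continuous extension of g_i to X_s), and {g_i} is an F-frame for X_F with respect to Θ_F. -/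

import Mathlib

open Filter Topology

noncomputable section

def IsNormOn {X : Type*} [AddCommGroup X] [Module ℝ X] (S : Set X) (N : X → ℝ) : Prop :=
  (0 : X) ∈ S ∧ (∀ c ∈ S, ∀ d ∈ S, c + d ∈ S) ∧ (∀ (a : ℝ), ∀ c ∈ S, a • c ∈ S) ∧
  (∀ c ∈ S, 0 ≤ N c) ∧ (∀ c ∈ S, N c = 0 → c = 0) ∧
  (∀ c ∈ S, ∀ d ∈ S, N (c + d) ≤ N c + N d) ∧
  (∀ (a : ℝ), ∀ c ∈ S, N (a • c) = |a| * N c)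

def IsBanachOn {X : Type*} [AddCommGroup X] [Module ℝ X] (S : Set X) (N : X → ℝ) : Prop :=
  IsNormOn S N ∧ ∀ u : ℕ → X, (∀ n, u n ∈ S) →
    (∀ ε > 0, ∃ M, ∀ m ≥ M, ∀ n ≥ M, N (u m - u n) < ε) →
    ∃ x ∈ S, Tendsto (fun n => N (u n - x)) atTop (nhds 0)

def IsBKOn (S : Set (ℕ → ℝ)) (N : (ℕ → ℝ) → ℝ) : Prop :=
  IsBanachOn S N ∧ ∀ i, ∃ K : ℝ, ∀ c ∈ S, |c i| ≤ K * N c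

def IsScale {X : Type*} [AddCommGroup X] [Module ℝ X] (S : ℕ → Set X) (N : ℕ → X → ℝ) : Prop :=
  (∀ s, IsBanachOn (S s) (N s)) ∧ (∀ s, S (s+1) ⊆ S s) ∧
  (∀ s, ∀ f ∈ S (s+1), N s f ≤ N (s+1) f) ∧
  (∀ s, ∀ f ∈ S s, ∀ ε > 0, ∃ h ∈ ⋂ t, S t, N s (f - h) < ε)

namespace FrameAux


variable {X : Type*} [AddCommGroup X] [Module ℝ X] {S : Set X} {N : X → ℝ}

theorem zero_mem (h : IsNormOn S N) : (0 : X) ∈ S := h.1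

theorem add_mem' (h : IsNormOn S N) {c d : X} (hc : c ∈ S) (hd : d ∈ S) : c + d ∈ S :=
  h.2.1 c hc d hd

theorem smul_mem' (h : IsNormOn S N) (a : ℝ) {c : X} (hc : c ∈ S) : a • c ∈ S :=
  h.2.2.1 a c hc

theorem neg_mem' (h : IsNormOn S N) {c : X} (hc : c ∈ S) : -c ∈ S := by
  simpa using smul_mem' h (-1) hc

theorem sub_mem' (h : IsNormOn S N) {c d : X} (hc : c ∈ S) (hd : d ∈ S) : c - d ∈ S := by
  rw [sub_eq_add_neg]; exact add_mem' h hc (neg_mem' h hd)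

theorem nonneg (h : IsNormOn S N) {c : X} (hc : c ∈ S) : 0 ≤ N c := h.2.2.2.1 c hc

theorem norm_zero' (h : IsNormOn S N) : N 0 = 0 := by
  have := h.2.2.2.2.2.2 0 0 (zero_mem h)
  simpa using this

theorem norm_smul' (h : IsNormOn S N) (a : ℝ) {c : X} (hc : c ∈ S) : N (a • c) = |a| * N c :=
  h.2.2.2.2.2.2 a c hc

theorem norm_neg' (h : IsNormOn S N) {c : X} (hc : c ∈ S) : N (-c) = N c := by
  have := norm_smul' h (-1) hc
  simpa using this

theorem triangle (h : IsNormOn S N) {c d : X} (hc : c ∈ S) (hd : d ∈ S) :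
    N (c + d) ≤ N c + N d := h.2.2.2.2.2.1 c hc d hd

theorem norm_sub_le'' (h : IsNormOn S N) {c d : X} (hc : c ∈ S) (hd : d ∈ S) :
    N (c - d) ≤ N c + N d := by
  rw [sub_eq_add_neg]
  exact le_trans (triangle h hc (neg_mem' h hd)) (by rw [norm_neg' h hd])

theorem norm_sub_rev (h : IsNormOn S N) {c d : X} (hc : c ∈ S) (hd : d ∈ S) :
    N (c - d) = N (d - c) := by
  rw [← norm_neg' h (sub_mem' h hc hd), neg_sub]

theorem eq_of_norm_sub_eq_zero (h : IsNormOn S N) {c d : X} (hc : c ∈ S) (hd : d ∈ S)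
    (h0 : N (c - d) = 0) : c = d :=
  sub_eq_zero.mp (h.2.2.2.2.1 _ (sub_mem' h hc hd) h0)

theorem sum_mem' (h : IsNormOn S N) {F : ℕ → X} (hF : ∀ i, F i ∈ S) (t : Finset ℕ) :
    (∑ i ∈ t, F i) ∈ S := by
  classical
  induction t using Finset.induction with
  | empty => simpa using zero_mem h
  | insert _ _ hx ih => rw [Finset.sum_insert hx]; exact add_mem' h (hF _) ih

theorem norm_sum_le (h : IsNormOn S N) {F : ℕ → X} (hF : ∀ i, F i ∈ S) (t : Finset ℕ) :
    N (∑ i ∈ t, F i) ≤ ∑ i ∈ t, N (F i) := by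
  classical
  induction t using Finset.induction with
  | empty => simp [norm_zero' h]
  | insert _ _ hx ih =>
      rw [Finset.sum_insert hx, Finset.sum_insert hx]
      exact le_trans (triangle h (hF _) (sum_mem' h hF _)) (by linarith)

/-- The submodule with carrier `S`. -/
def subOf (h : IsNormOn S N) : Submodule ℝ X where
  carrier := S
  zero_mem' := zero_mem h
  add_mem' := fun hc hd => add_mem' h hc hd
  smul_mem' := fun a _ hc => smul_mem' h a hc

/-- A linear projection of `X` onto `S`. -/
theorem exists_proj (h : IsNormOn S N) :
    ∃ P : X →ₗ[ℝ] X, (∀ x, P x ∈ S) ∧ ∀ f ∈ S, P f = f := by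
  obtain ⟨q, hq⟩ := (subOf h).exists_isCompl
  refine ⟨(subOf h).subtype.comp (Submodule.projectionOnto _ q hq), fun x => ?_, fun f hf => ?_⟩
  · exact ((Submodule.projectionOnto _ q hq) x).2
  · have := Submodule.linearProjOfIsCompl_apply_left hq (⟨f, hf⟩ : subOf h)
    simp only [LinearMap.comp_apply, Submodule.subtype_apply]
    rw [this]

/-- Hahn–Banach: norming functional for `x ∈ S`, bounded by `N` on `S`. -/
theorem exists_functional (h : IsNormOn S N) {x : X} (hx : x ∈ S) :
    ∃ G : X →ₗ[ℝ] ℝ, G x = N x ∧ ∀ f ∈ S, |G f| ≤ N f := by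
  obtain ⟨P, hPmem, hPid⟩ := exists_proj h
  set p : X → ℝ := fun y => N (P y) with hp
  have p_hom : ∀ c : ℝ, 0 < c → ∀ y, p (c • y) = c * p y := by
    intro c hc y
    simp only [p, map_smul]
    rw [norm_smul' h c (hPmem y), abs_of_pos hc]
  have p_add : ∀ y z, p (y + z) ≤ p y + p z := by
    intro y z
    simp only [p, map_add]
    exact triangle h (hPmem y) (hPmem z)
  by_cases hx0 : x = 0
  · refine ⟨0, ?_, ?_⟩
    · simp [hx0, norm_zero' h]
    · intro f hf; simpa using nonneg h hf
  · set fp := LinearPMap.mkSpanSingleton (K := ℝ) (L := ℝ) (σ := RingHom.id ℝ) x (N x) hx0 with hfp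
    have hf : ∀ z : fp.domain, fp z ≤ p z := by
      rintro ⟨z, hz⟩
      obtain ⟨a, ha⟩ := Submodule.mem_span_singleton.mp hz
      have : fp ⟨z, hz⟩ = a * N x := by
        subst ha
        have := LinearPMap.mkSpanSingleton'_apply (σ := RingHom.id ℝ) x (N x)
          (fun c hc => (smul_eq_zero.1 hc).elim (fun hc => by rw [hc, RingHom.map_zero, zero_smul])
            fun hx' => absurd hx' hx0) a hz
        simpa [fp, smul_eq_mul] using this
      rw [this]
      have hz' : z ∈ S := by rw [← ha]; exact smul_mem' h a hx
      have : p z = |a| * N x := by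
        simp only [p]
        rw [hPid z hz', ← ha, norm_smul' h a hx]
      rw [this]
      exact mul_le_mul_of_nonneg_right (le_abs_self a) (nonneg h hx)
    obtain ⟨G, hGeq, hGle⟩ := exists_extension_of_le_sublinear fp p p_hom p_add hf
    refine ⟨G, ?_, ?_⟩
    · have := hGeq ⟨x, Submodule.mem_span_singleton_self x⟩
      rw [this]
      exact LinearPMap.mkSpanSingleton_apply ℝ ℝ hx0 (N x)
    · intro f hf'
      rw [abs_le]
      constructor
      · have h1 := hGle (-f)
        have h2 : G (-f) = -G f := by simp
        have h3 : p (-f) = N f := by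
          simp only [p, map_neg]
          rw [hPid f hf']
          exact norm_neg' h hf'
        rw [h2, h3] at h1
        linarith
      · have := hGle f
        simpa [p, hPid f hf'] using this

/-- truncation of a sequence -/
def trunc (c : ℕ → ℝ) (n : ℕ) : ℕ → ℝ := fun j => if j < n then c j else 0

theorem trunc_def (c : ℕ → ℝ) (n : ℕ) : trunc c n = fun j => if j < n then c j else 0 := rfl

theorem trunc_zero (c : ℕ → ℝ) : trunc c 0 = 0 := by
  funext j; simp [trunc]

theorem trunc_succ (c : ℕ → ℝ) (n : ℕ) :
    trunc c (n + 1) = trunc c n + c n • (Pi.single n (1 : ℝ) : ℕ → ℝ) := by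
  funext j
  simp only [trunc, Pi.add_apply, Pi.smul_apply, Pi.single_apply, smul_eq_mul]
  rcases lt_trichotomy j n with hj | hj | hj
  · simp [hj, Nat.lt_succ_of_lt hj, hj.ne]
  · subst hj; simp
  · have h1 : ¬ j < n := by omega
    have h2 : ¬ j < n + 1 := by omega
    rw [if_neg h1, if_neg h2, if_neg (by omega : ¬ j = n)]
    simp

theorem trunc_mem {T : Set (ℕ → ℝ)} {NT : (ℕ → ℝ) → ℝ} (h : IsNormOn T NT)
    (hcanon : ∀ i, Pi.single i (1 : ℝ) ∈ T) (c : ℕ → ℝ) (n : ℕ) : trunc c n ∈ T := by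
  induction n with
  | zero => rw [trunc_zero]; exact h.1
  | succ n ih =>
      rw [trunc_succ]
      exact h.2.1 _ ih _ (h.2.2.1 (c n) _ (hcanon n))

theorem trunc_sub {m n : ℕ} (c : ℕ → ℝ) (hmn : m ≤ n) :
    trunc c n - trunc c m = trunc (c - trunc c m) n := by
  funext j
  simp only [trunc, Pi.sub_apply]
  by_cases h1 : j < n
  · simp [h1]
  · have : ¬ j < m := fun hc => h1 (lt_of_lt_of_le hc hmn)
    simp [h1, this]

theorem trunc_mul_sum (c d : ℕ → ℝ) {m n k : ℕ} (hmn : m ≤ n) (hnk : n ≤ k) :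
    ∑ i ∈ Finset.range k, trunc (c - trunc c m) n i * d i = ∑ i ∈ Finset.Ico m n, c i * d i := by
  rw [Finset.range_eq_Ico]
  rw [← Finset.sum_subset (Finset.Ico_subset_Ico (Nat.zero_le m) hnk)
    (f := fun i => trunc (c - trunc c m) n i * d i)]
  · apply Finset.sum_congr rfl
    intro i hi
    rw [Finset.mem_Ico] at hi
    simp [trunc, hi.1, hi.2, Nat.not_lt.mpr hi.1]
  · intro i hi hni
    rw [Finset.mem_Ico] at hi hni
    simp only [trunc, Pi.sub_apply]
    by_cases h1 : i < n
    · have h2 : i < m := by omega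
      simp [h1, h2]
    · simp [h1]

end FrameAux

set_option maxHeartbeats 2000000 in
/-- let `{X_s}` be a Banach scale and `{Θ_s}` a scale of `λ_s`-BK-spaces
such that each `Θ_s` and each dual `Θ_s*` is a CB-space (the CB-property of the dual is
expressed by the vanishing of the tail norms of every bounded coefficient functional).
If `(g i) ⊂ X_F*` is an F-Bessel sequence for `X_F` w.r.t. `Θ_F` and `(fv i) ⊂ X_F` is a
DF-Bessel sequence (a `Θ_s*`-Bessel sequence for `X_s*` for every `s`) with
`f = ∑ g i f • fv i` in `X_F` for every `f ∈ X_F`, then for every `s` the extensions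
`g_i^s` of `g_i` to `X_s` give `f = ∑ g_i^s(f) • fv i` in `X_s` for every `f ∈ X_s`, and
`(g i)` is an F-frame for `X_F` with respect to `Θ_F`. -/
theorem expansions_extend_and_Fframe
    {X : Type*} [AddCommGroup X] [Module ℝ X]
    (S : ℕ → Set X) (N : ℕ → X → ℝ) (hX : IsScale S N)
    (T : ℕ → Set (ℕ → ℝ)) (NT : ℕ → (ℕ → ℝ) → ℝ) (hT : IsScale T NT)
    (hBK : ∀ s, ∀ i, ∃ K : ℝ, ∀ c ∈ T s, |c i| ≤ K * NT s c)
    (lam : ℕ → ℝ) (hlam : ∀ s, 1 ≤ lam s)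
    (hcanon : ∀ s i, Pi.single i (1 : ℝ) ∈ T s)
    (htrunc : ∀ s, ∀ c ∈ T s, ∀ n : ℕ,
      NT s (fun j => if j < n then c j else 0) ≤ lam s * NT s c)
    (hCB : ∀ s, ∀ c ∈ T s,
      Tendsto (fun n => NT s (c - fun j => if j < n then c j else 0)) atTop (nhds 0))
    -- `Θ_s*` is a CB-space: the tail norms of every bounded coefficient functional
    -- `d = (G (e i))_i ∈ Θ_s*` tend to `0`.
    (hdualCB : ∀ s, ∀ d : ℕ → ℝ,
      (∃ K : ℝ, ∀ c ∈ T s, ∀ n : ℕ, |∑ i ∈ Finset.range n, c i * d i| ≤ K * NT s c) →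
      Tendsto (fun n => sInf {K : ℝ | 0 ≤ K ∧ ∀ c ∈ T s, ∀ m : ℕ,
        |∑ i ∈ Finset.Ico n m, c i * d i| ≤ K * NT s c}) atTop (nhds 0))
    (g : ℕ → X →ₗ[ℝ] ℝ) (B : ℕ → ℝ)
    -- F-Bessel sequence for `X_F` w.r.t. `Θ_F`:
    (hBessel : ∀ f ∈ ⋂ s, S s, (fun i => g i f) ∈ ⋂ s, T s ∧
      ∀ s, NT s (fun i => g i f) ≤ B s * N s f)
    (fv : ℕ → X) (hfv : ∀ i, fv i ∈ ⋂ s, S s)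
    -- DF-Bessel: `(fv i)` is a `Θ_s*`-Bessel sequence for `X_s*` for every `s`:
    (hDF : ∀ s, ∃ D : ℝ, ∀ G : X →ₗ[ℝ] ℝ, ∀ C : ℝ, (∀ f ∈ S s, |G f| ≤ C * N s f) →
      ∀ c ∈ T s, ∃ L : ℝ,
        Tendsto (fun n => ∑ i ∈ Finset.range n, c i * G (fv i)) atTop (nhds L) ∧
        |L| ≤ D * C * NT s c)
    -- the expansion `f = ∑ g i f • fv i` holds in `X_F`:
    (hexp : ∀ f ∈ ⋂ s, S s, ∀ s,
      Tendsto (fun n => N s (f - ∑ i ∈ Finset.range n, g i f • fv i)) atTop (nhds 0)) :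
    (∀ s, ∃ gs : ℕ → X →ₗ[ℝ] ℝ,
      (∀ i, ∃ C : ℝ, ∀ f ∈ S s, |gs i f| ≤ C * N s f) ∧
      (∀ i, ∀ f ∈ ⋂ t, S t, gs i f = g i f) ∧
      (∀ f ∈ S s,
        Tendsto (fun n => N s (f - ∑ i ∈ Finset.range n, gs i f • fv i)) atTop (nhds 0))) ∧
    ((∀ s, ∃ A > 0, ∀ f ∈ ⋂ t, S t, A * N s f ≤ NT s (fun i => g i f)) ∧
      ∃ V : (ℕ → ℝ) →ₗ[ℝ] X,
        (∀ c ∈ ⋂ s, T s, V c ∈ ⋂ s, S s) ∧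
        (∀ s, ∃ K : ℝ, ∀ c ∈ ⋂ t, T t, N s (V c) ≤ K * NT s c) ∧
        (∀ f ∈ ⋂ s, S s, V (fun i => g i f) = f)) := by
  classical
  obtain ⟨hXB, hXdec, hXmono, hXdense⟩ := hX
  obtain ⟨hTB, hTdec, hTmono, hTdense⟩ := hT
  have hXN : ∀ s, IsNormOn (S s) (N s) := fun s => (hXB s).1
  have hTN : ∀ s, IsNormOn (T s) (NT s) := fun s => (hTB s).1
  have hfvS : ∀ i s, fv i ∈ S s := fun i s => Set.mem_iInter.mp (hfv i) s
  have hITmem : ∀ c ∈ ⋂ t, T t, ∀ s, c ∈ T s := fun c hc s => Set.mem_iInter.mp hc s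
  have hISmem : ∀ f ∈ ⋂ t, S t, ∀ s, f ∈ S s := fun f hf s => Set.mem_iInter.mp hf s
  -- synthesis bound from Hahn–Banach and the DF-Bessel property
  have hSyn : ∀ s, ∃ D : ℝ, 0 ≤ D ∧ ∀ c ∈ T s, ∀ m n : ℕ, m ≤ n →
      N s (∑ i ∈ Finset.Ico m n, c i • fv i) ≤
        D * NT s (FrameAux.trunc (c - FrameAux.trunc c m) n) := by
    intro s
    obtain ⟨D0, hD0⟩ := hDF s
    refine ⟨max D0 0, le_max_right _ _, ?_⟩
    intro c hc m n hmn
    set x := ∑ i ∈ Finset.Ico m n, c i • fv i with hxdef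
    have hxS : x ∈ S s :=
      FrameAux.sum_mem' (hXN s) (fun i => FrameAux.smul_mem' (hXN s) _ (hfvS i s)) _
    obtain ⟨G, hGx, hGle⟩ := FrameAux.exists_functional (hXN s) hxS
    have hGle1 : ∀ f ∈ S s, |G f| ≤ 1 * N s f := by
      intro f hf; rw [one_mul]; exact hGle f hf
    set c' := FrameAux.trunc (c - FrameAux.trunc c m) n with hc'def
    have hc' : c' ∈ T s := FrameAux.trunc_mem (hTN s) (hcanon s) _ n
    obtain ⟨L, hLt, hLb⟩ := hD0 G 1 hGle1 c' hc'
    have hGsum : G x = ∑ i ∈ Finset.Ico m n, c i * G (fv i) := by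
      rw [hxdef, map_sum]
      exact Finset.sum_congr rfl fun i _ => by rw [map_smul, smul_eq_mul]
    have hconst : ∀ k, k ≥ n → (∑ i ∈ Finset.range k, c' i * G (fv i)) = G x := by
      intro k hk
      rw [hGsum, hc'def]
      exact FrameAux.trunc_mul_sum c (fun i => G (fv i)) hmn hk
    have hLx : L = G x :=
      tendsto_nhds_unique hLt (tendsto_atTop_of_eventually_const hconst)
    have hNT : 0 ≤ NT s c' := FrameAux.nonneg (hTN s) hc'
    calc N s x = G x := hGx.symm
      _ ≤ |L| := by rw [hLx] at *; exact le_abs_self _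
      _ ≤ D0 * 1 * NT s c' := hLb
      _ ≤ max D0 0 * NT s c' := by
          rw [mul_one]
          exact mul_le_mul_of_nonneg_right (le_max_left _ _) hNT
  choose D hD0 hDsyn using hSyn
  have hpsum_mem : ∀ (c : ℕ → ℝ) (n : ℕ) (s : ℕ),
      (∑ i ∈ Finset.range n, c i • fv i) ∈ S s := fun c n s =>
    FrameAux.sum_mem' (hXN s) (fun i => FrameAux.smul_mem' (hXN s) _ (hfvS i s)) _
  have hpsum_bound : ∀ s, ∀ c ∈ T s, ∀ m n : ℕ, m ≤ n →
      N s ((∑ i ∈ Finset.range n, c i • fv i) - ∑ i ∈ Finset.range m, c i • fv i) ≤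
        (D s * lam s) * NT s (c - FrameAux.trunc c m) := by
    intro s c hc m n hmn
    rw [← Finset.sum_Ico_eq_sub _ hmn]
    have h1 := hDsyn s c hc m n hmn
    have hmem : c - FrameAux.trunc c m ∈ T s :=
      FrameAux.sub_mem' (hTN s) hc (FrameAux.trunc_mem (hTN s) (hcanon s) c m)
    have h2 : NT s (FrameAux.trunc (c - FrameAux.trunc c m) n) ≤
        lam s * NT s (c - FrameAux.trunc c m) := htrunc s _ hmem n
    calc N s (∑ i ∈ Finset.Ico m n, c i • fv i)
        ≤ D s * NT s (FrameAux.trunc (c - FrameAux.trunc c m) n) := h1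
      _ ≤ D s * (lam s * NT s (c - FrameAux.trunc c m)) :=
          mul_le_mul_of_nonneg_left h2 (hD0 s)
      _ = (D s * lam s) * NT s (c - FrameAux.trunc c m) := (mul_assoc _ _ _).symm
  have hV : ∀ c ∈ ⋂ t, T t, ∃ x ∈ ⋂ t, S t, ∀ s,
      Tendsto (fun n => N s (x - ∑ i ∈ Finset.range n, c i • fv i)) atTop (nhds 0) := by
    intro c hc
    set u : ℕ → X := fun n => ∑ i ∈ Finset.range n, c i • fv i with hu
    have hcs : ∀ s, c ∈ T s := hITmem c hc
    have hcauchy : ∀ s, ∀ ε > 0, ∃ M, ∀ m ≥ M, ∀ n ≥ M, N s (u m - u n) < ε := by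
      intro s ε hε
      have hD1 : (0:ℝ) < D s * lam s + 1 := by nlinarith [hD0 s, hlam s]
      have hpos : 0 < ε / (D s * lam s + 1) := div_pos hε hD1
      obtain ⟨M, hM⟩ := (Metric.tendsto_atTop.mp (hCB s c (hcs s))) _ hpos
      have key : ∀ m, m ≥ M → ∀ n, m ≤ n → N s (u n - u m) < ε := by
        intro m hm n hmn
        have h1 := hpsum_bound s c (hcs s) m n hmn
        have h2a := hM m hm
        rw [Real.dist_eq, sub_zero] at h2a
        have h2b : |NT s (c - FrameAux.trunc c m)| < ε / (D s * lam s + 1) := h2a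
        have hmem : c - FrameAux.trunc c m ∈ T s :=
          FrameAux.sub_mem' (hTN s) (hcs s) (FrameAux.trunc_mem (hTN s) (hcanon s) c m)
        have h3 : 0 ≤ NT s (c - FrameAux.trunc c m) := FrameAux.nonneg (hTN s) hmem
        rw [abs_of_nonneg h3] at h2b
        have h2 := h2b
        calc N s (u n - u m) ≤ (D s * lam s) * NT s (c - FrameAux.trunc c m) := h1
          _ ≤ (D s * lam s + 1) * NT s (c - FrameAux.trunc c m) := by nlinarith
          _ < (D s * lam s + 1) * (ε / (D s * lam s + 1)) :=
              mul_lt_mul_of_pos_left h2 hD1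
          _ = ε := by field_simp
      refine ⟨M, fun m hm n hn => ?_⟩
      rcases le_total m n with h | h
      · rw [FrameAux.norm_sub_rev (hXN s) (hpsum_mem c m s) (hpsum_mem c n s)]
        exact key m hm n h
      · exact key n hn m h
    have hcomp : ∀ s, ∃ y ∈ S s, Tendsto (fun n => N s (y - u n)) atTop (nhds 0) := by
      intro s
      obtain ⟨y, hyS, hyT⟩ := (hXB s).2 u (fun n => hpsum_mem c n s) (hcauchy s)
      refine ⟨y, hyS, ?_⟩
      have heq : ∀ n, N s (y - u n) = N s (u n - y) := fun n =>
        FrameAux.norm_sub_rev (hXN s) hyS (hpsum_mem c n s)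
      simpa only [heq] using hyT
    choose y hyS hyT using hcomp
    have hstep : ∀ s, y (s+1) = y s := by
      intro s
      have hmem1 : ∀ n, y (s+1) - u n ∈ S (s+1) := fun n =>
        FrameAux.sub_mem' (hXN (s+1)) (hyS (s+1)) (hpsum_mem c n (s+1))
      have h1 : Tendsto (fun n => N s (y (s+1) - u n)) atTop (nhds 0) := by
        apply squeeze_zero
          (fun n => FrameAux.nonneg (hXN s) (hXdec s (hmem1 n)))
          (fun n => hXmono s _ (hmem1 n))
          (hyT (s+1))
      have h2 : ∀ n, N s (y s - y (s+1)) ≤ N s (y s - u n) + N s (u n - y (s+1)) := by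
        intro n
        have e : y s - y (s+1) = (y s - u n) + (u n - y (s+1)) := by abel
        rw [e]
        exact FrameAux.triangle (hXN s)
          (FrameAux.sub_mem' (hXN s) (hyS s) (hpsum_mem c n s))
          (FrameAux.sub_mem' (hXN s) (hpsum_mem c n s) (hXdec s (hyS (s+1))))
      have h1' : Tendsto (fun n => N s (u n - y (s+1))) atTop (nhds 0) := by
        have heq : ∀ n, N s (u n - y (s+1)) = N s (y (s+1) - u n) := fun n =>
          FrameAux.norm_sub_rev (hXN s) (hpsum_mem c n s) (hXdec s (hyS (s+1)))
        simpa only [heq] using h1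
      have h3 : Tendsto (fun n => N s (y s - u n) + N s (u n - y (s+1))) atTop (nhds 0) := by
        simpa using (hyT s).add h1'
      have h4 : N s (y s - y (s+1)) ≤ 0 := ge_of_tendsto' h3 h2
      have h5 : N s (y s - y (s+1)) = 0 :=
        le_antisymm h4 (FrameAux.nonneg (hXN s)
          (FrameAux.sub_mem' (hXN s) (hyS s) (hXdec s (hyS (s+1)))))
      exact (FrameAux.eq_of_norm_sub_eq_zero (hXN s) (hyS s) (hXdec s (hyS (s+1))) h5).symm
    have hall : ∀ s, y s = y 0 := by
      intro s
      induction s with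
      | zero => rfl
      | succ s ih => rw [hstep s, ih]
    refine ⟨y 0, Set.mem_iInter.mpr fun s => ?_, fun s => ?_⟩
    · rw [← hall s]; exact hyS s
    · have := hyT s
      rw [hall s] at this
      exact this
  have huniq : ∀ (c : ℕ → ℝ) (x y : X), x ∈ S 0 → y ∈ S 0 →
      Tendsto (fun n => N 0 (x - ∑ i ∈ Finset.range n, c i • fv i)) atTop (nhds 0) →
      Tendsto (fun n => N 0 (y - ∑ i ∈ Finset.range n, c i • fv i)) atTop (nhds 0) →
      x = y := by
    intro c x y hx hy hxT hyT
    set u : ℕ → X := fun n => ∑ i ∈ Finset.range n, c i • fv i with hu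
    have hun : ∀ n, u n ∈ S 0 := fun n => hpsum_mem c n 0
    have h2 : ∀ n, N 0 (x - y) ≤ N 0 (x - u n) + N 0 (u n - y) := by
      intro n
      have e : x - y = (x - u n) + (u n - y) := by abel
      rw [e]
      exact FrameAux.triangle (hXN 0)
        (FrameAux.sub_mem' (hXN 0) hx (hun n))
        (FrameAux.sub_mem' (hXN 0) (hun n) hy)
    have h1' : Tendsto (fun n => N 0 (u n - y)) atTop (nhds 0) := by
      have heq : ∀ n, N 0 (u n - y) = N 0 (y - u n) := fun n =>
        FrameAux.norm_sub_rev (hXN 0) (hun n) hy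
      simpa only [heq] using hyT
    have h3 : Tendsto (fun n => N 0 (x - u n) + N 0 (u n - y)) atTop (nhds 0) := by
      simpa using hxT.add h1'
    have h4 : N 0 (x - y) = 0 :=
      le_antisymm (ge_of_tendsto' h3 h2)
        (FrameAux.nonneg (hXN 0) (FrameAux.sub_mem' (hXN 0) hx hy))
    exact FrameAux.eq_of_norm_sub_eq_zero (hXN 0) hx hy h4
  have hVtot : ∀ c : ℕ → ℝ, ∃ x : X, c ∈ (⋂ t, T t) → x ∈ (⋂ t, S t) ∧ ∀ s,
      Tendsto (fun n => N s (x - ∑ i ∈ Finset.range n, c i • fv i)) atTop (nhds 0) := by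
    intro c
    by_cases hc : c ∈ ⋂ t, T t
    · obtain ⟨x, hx1, hx2⟩ := hV c hc
      exact ⟨x, fun _ => ⟨hx1, hx2⟩⟩
    · exact ⟨0, fun h => absurd h hc⟩
  choose Vf hVf using hVtot
  have hVfS : ∀ c ∈ ⋂ t, T t, Vf c ∈ ⋂ t, S t := fun c hc => (hVf c hc).1
  have hVfT : ∀ c ∈ ⋂ t, T t, ∀ s,
      Tendsto (fun n => N s (Vf c - ∑ i ∈ Finset.range n, c i • fv i)) atTop (nhds 0) :=
    fun c hc => (hVf c hc).2
  have hITN : IsNormOn (⋂ t, T t) (NT 0) := by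
    refine ⟨?_, ?_, ?_, ?_, ?_, ?_, ?_⟩
    · exact Set.mem_iInter.mpr fun t => FrameAux.zero_mem (hTN t)
    · intro c hc d hd
      exact Set.mem_iInter.mpr fun t =>
        FrameAux.add_mem' (hTN t) (hITmem c hc t) (hITmem d hd t)
    · intro a c hc
      exact Set.mem_iInter.mpr fun t => FrameAux.smul_mem' (hTN t) a (hITmem c hc t)
    · intro c hc; exact FrameAux.nonneg (hTN 0) (hITmem c hc 0)
    · intro c hc h; exact (hTN 0).2.2.2.2.1 c (hITmem c hc 0) h
    · intro c hc d hd
      exact FrameAux.triangle (hTN 0) (hITmem c hc 0) (hITmem d hd 0)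
    · intro a c hc; exact FrameAux.norm_smul' (hTN 0) a (hITmem c hc 0)
  have hVfb : ∀ s, ∀ c ∈ ⋂ t, T t, N s (Vf c) ≤ (D s * lam s) * NT s c := by
    intro s c hc
    have hub : ∀ n, N s (∑ i ∈ Finset.range n, c i • fv i) ≤ (D s * lam s) * NT s c := by
      intro n
      have h1 := hpsum_bound s c (hITmem c hc s) 0 n (Nat.zero_le n)
      rw [Finset.range_zero, Finset.sum_empty, sub_zero, FrameAux.trunc_zero, sub_zero] at h1
      exact h1
    have h2 : ∀ n, N s (Vf c) ≤
        N s (Vf c - ∑ i ∈ Finset.range n, c i • fv i) + (D s * lam s) * NT s c := by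
      intro n
      have e : Vf c = (Vf c - ∑ i ∈ Finset.range n, c i • fv i) +
          ∑ i ∈ Finset.range n, c i • fv i := by abel
      calc N s (Vf c) = N s ((Vf c - ∑ i ∈ Finset.range n, c i • fv i) +
          ∑ i ∈ Finset.range n, c i • fv i) := by rw [← e]
        _ ≤ N s (Vf c - ∑ i ∈ Finset.range n, c i • fv i) +
            N s (∑ i ∈ Finset.range n, c i • fv i) :=
          FrameAux.triangle (hXN s)
            (FrameAux.sub_mem' (hXN s) (hISmem _ (hVfS c hc) s) (hpsum_mem c n s))
            (hpsum_mem c n s)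
        _ ≤ _ := by linarith [hub n]
    have h3 : Tendsto (fun n => N s (Vf c - ∑ i ∈ Finset.range n, c i • fv i) +
        (D s * lam s) * NT s c) atTop (nhds ((D s * lam s) * NT s c)) := by
      simpa using (hVfT c hc s).add (tendsto_const_nhds (x := (D s * lam s) * NT s c))
    exact ge_of_tendsto' h3 h2
  have hVfadd : ∀ c ∈ ⋂ t, T t, ∀ d ∈ ⋂ t, T t, Vf (c + d) = Vf c + Vf d := by
    intro c hc d hd
    have hcd : c + d ∈ ⋂ t, T t := Set.mem_iInter.mpr fun t =>
      FrameAux.add_mem' (hTN t) (hITmem c hc t) (hITmem d hd t)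
    have hmemc : ∀ n, (Vf c - ∑ i ∈ Finset.range n, c i • fv i) ∈ S 0 := fun n =>
      FrameAux.sub_mem' (hXN 0) (hISmem _ (hVfS c hc) 0) (hpsum_mem c n 0)
    have hmemd : ∀ n, (Vf d - ∑ i ∈ Finset.range n, d i • fv i) ∈ S 0 := fun n =>
      FrameAux.sub_mem' (hXN 0) (hISmem _ (hVfS d hd) 0) (hpsum_mem d n 0)
    apply huniq (c + d) _ _ (hISmem _ (hVfS _ hcd) 0)
      (FrameAux.add_mem' (hXN 0) (hISmem _ (hVfS c hc) 0) (hISmem _ (hVfS d hd) 0))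
      (hVfT _ hcd 0)
    have he : ∀ n, Vf c + Vf d - ∑ i ∈ Finset.range n, (c + d) i • fv i =
        (Vf c - ∑ i ∈ Finset.range n, c i • fv i) +
        (Vf d - ∑ i ∈ Finset.range n, d i • fv i) := by
      intro n
      have : ∀ n, ∑ i ∈ Finset.range n, (c + d) i • fv i =
          (∑ i ∈ Finset.range n, c i • fv i) + ∑ i ∈ Finset.range n, d i • fv i := by
        intro n
        rw [← Finset.sum_add_distrib]
        exact Finset.sum_congr rfl fun i _ => by rw [Pi.add_apply, add_smul]
      rw [this]; abel
    apply squeeze_zero (g := fun n => N 0 (Vf c - ∑ i ∈ Finset.range n, c i • fv i) +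
        N 0 (Vf d - ∑ i ∈ Finset.range n, d i • fv i))
    · intro n
      apply FrameAux.nonneg (hXN 0)
      rw [he n]
      exact FrameAux.add_mem' (hXN 0) (hmemc n) (hmemd n)
    · intro n
      rw [he n]
      exact FrameAux.triangle (hXN 0) (hmemc n) (hmemd n)
    · simpa using (hVfT c hc 0).add (hVfT d hd 0)
  have hVfsmul : ∀ (a : ℝ), ∀ c ∈ ⋂ t, T t, Vf (a • c) = a • Vf c := by
    intro a c hc
    have hac : a • c ∈ ⋂ t, T t := Set.mem_iInter.mpr fun t =>
      FrameAux.smul_mem' (hTN t) a (hITmem c hc t)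
    apply huniq (a • c) _ _ (hISmem _ (hVfS _ hac) 0)
      (FrameAux.smul_mem' (hXN 0) a (hISmem _ (hVfS c hc) 0))
      (hVfT _ hac 0)
    have he : ∀ n, a • Vf c - ∑ i ∈ Finset.range n, (a • c) i • fv i =
        a • (Vf c - ∑ i ∈ Finset.range n, c i • fv i) := by
      intro n
      have : ∑ i ∈ Finset.range n, (a • c) i • fv i =
          a • ∑ i ∈ Finset.range n, c i • fv i := by
        rw [Finset.smul_sum]
        exact Finset.sum_congr rfl fun i _ => by
          rw [Pi.smul_apply, smul_eq_mul, mul_smul]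
      rw [this, smul_sub]
    have he2 : ∀ n, N 0 (a • Vf c - ∑ i ∈ Finset.range n, (a • c) i • fv i) =
        |a| * N 0 (Vf c - ∑ i ∈ Finset.range n, c i • fv i) := by
      intro n
      rw [he n]
      exact FrameAux.norm_smul' (hXN 0) a
        (FrameAux.sub_mem' (hXN 0) (hISmem _ (hVfS c hc) 0) (hpsum_mem c n 0))
    simp only [he2]
    simpa using (hVfT c hc 0).const_mul |a|
  have hVfg : ∀ f ∈ ⋂ t, S t, Vf (fun i => g i f) = f := by
    intro f hf
    have hgT := (hBessel f hf).1
    exact huniq (fun i => g i f) _ f (hISmem _ (hVfS _ hgT) 0) (hISmem f hf 0)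
      (hVfT _ hgT 0) (hexp f hf 0)
  obtain ⟨Q, hQmem, hQid⟩ := FrameAux.exists_proj hITN
  constructor
  · -- PART 1 : extension of the expansion to each X_s
    intro s
    -- coefficient bounds on the dense subspace
    have hCex : ∀ i, ∃ Ci : ℝ, 0 ≤ Ci ∧ ∀ h' ∈ ⋂ t, S t, |g i h'| ≤ Ci * N s h' := by
      intro i
      obtain ⟨K, hK⟩ := hBK s i
      refine ⟨max K 0 * max (B s) 0, by positivity, ?_⟩
      intro h' hh'
      have h1 := hK _ (hITmem _ (hBessel h' hh').1 s)
      have h2 := (hBessel h' hh').2 s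
      have hNT0 : 0 ≤ NT s (fun j => g j h') :=
        FrameAux.nonneg (hTN s) (hITmem _ (hBessel h' hh').1 s)
      have hN0 : 0 ≤ N s h' := FrameAux.nonneg (hXN s) (hISmem h' hh' s)
      calc |g i h'| ≤ K * NT s (fun j => g j h') := h1
        _ ≤ max K 0 * NT s (fun j => g j h') :=
            mul_le_mul_of_nonneg_right (le_max_left _ _) hNT0
        _ ≤ max K 0 * (max (B s) 0 * N s h') := by
            refine mul_le_mul_of_nonneg_left ?_ (le_max_right K 0)
            calc NT s (fun j => g j h') ≤ B s * N s h' := h2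
              _ ≤ max (B s) 0 * N s h' :=
                  mul_le_mul_of_nonneg_right (le_max_left _ _) hN0
        _ = (max K 0 * max (B s) 0) * N s h' := (mul_assoc _ _ _).symm
    choose C hC0 hC using hCex
    -- approximating sequences from the dense subspace
    have happrox : ∀ f : X, ∃ hs : ℕ → X, (∀ k, hs k ∈ ⋂ t, S t) ∧
        (f ∈ S s → Tendsto (fun k => N s (f - hs k)) atTop (nhds 0)) := by
      intro f
      by_cases hf : f ∈ S s
      · have hex : ∀ k : ℕ, ∃ h' ∈ ⋂ t, S t, N s (f - h') < 1 / (k + 1) :=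
          fun k => hXdense s f hf (1 / (k + 1)) (by positivity)
        choose hs hmem hlt using hex
        refine ⟨hs, hmem, fun _ => ?_⟩
        apply squeeze_zero
          (fun k => FrameAux.nonneg (hXN s)
            (FrameAux.sub_mem' (hXN s) hf (hISmem _ (hmem k) s)))
          (fun k => le_of_lt (hlt k))
        exact tendsto_one_div_add_atTop_nhds_zero_nat
      · exact ⟨fun _ => 0,
          fun _ => Set.mem_iInter.mpr fun t => FrameAux.zero_mem (hXN t),
          fun h => absurd h hf⟩
    choose hseq hseqmem hseqlim using happrox
    obtain ⟨P, hPmem, hPid⟩ := FrameAux.exists_proj (hXN s)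
    -- existence of the limits of coefficients along approximating sequences
    have hlimex : ∀ (i : ℕ) (x : X), ∃ L : ℝ,
        Tendsto (fun k => g i (hseq (P x) k)) atTop (nhds L) := by
      intro i x
      have hfs : P x ∈ S s := hPmem x
      apply cauchySeq_tendsto_of_complete
      rw [Metric.cauchySeq_iff]
      intro ε hε
      have hpos : 0 < ε / (2 * (C i + 1)) := by
        have := hC0 i; positivity
      obtain ⟨M, hM⟩ := (Metric.tendsto_atTop.mp (hseqlim (P x) hfs)) _ hpos
      have hd : ∀ k, k ≥ M → N s (P x - hseq (P x) k) < ε / (2 * (C i + 1)) := by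
        intro k hk
        have h0 := hM k hk
        rw [Real.dist_eq, sub_zero, abs_of_nonneg (FrameAux.nonneg (hXN s)
          (FrameAux.sub_mem' (hXN s) hfs (hISmem _ (hseqmem (P x) k) s)))] at h0
        exact h0
      refine ⟨M, fun m hm n hn => ?_⟩
      have hdiff : |g i (hseq (P x) m) - g i (hseq (P x) n)| ≤
          C i * (N s (P x - hseq (P x) m) + N s (P x - hseq (P x) n)) := by
        have e : g i (hseq (P x) m) - g i (hseq (P x) n) =
            g i (hseq (P x) m - hseq (P x) n) := (map_sub _ _ _).symm
        rw [e]
        have hmem2 : hseq (P x) m - hseq (P x) n ∈ ⋂ t, S t :=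
          Set.mem_iInter.mpr fun t => FrameAux.sub_mem' (hXN t)
            (hISmem _ (hseqmem (P x) m) t) (hISmem _ (hseqmem (P x) n) t)
        refine le_trans (hC i _ hmem2) (mul_le_mul_of_nonneg_left ?_ (hC0 i))
        have e2 : hseq (P x) m - hseq (P x) n =
            (P x - hseq (P x) n) - (P x - hseq (P x) m) := by abel
        rw [e2]
        have := FrameAux.norm_sub_le'' (hXN s)
          (FrameAux.sub_mem' (hXN s) hfs (hISmem _ (hseqmem (P x) n) s))
          (FrameAux.sub_mem' (hXN s) hfs (hISmem _ (hseqmem (P x) m) s))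
        linarith
      rw [Real.dist_eq]
      have h1 := hd m hm
      have h2 := hd n hn
      have hc0 := hC0 i
      have hnn1 : 0 ≤ N s (P x - hseq (P x) m) := FrameAux.nonneg (hXN s)
        (FrameAux.sub_mem' (hXN s) hfs (hISmem _ (hseqmem (P x) m) s))
      have hnn2 : 0 ≤ N s (P x - hseq (P x) n) := FrameAux.nonneg (hXN s)
        (FrameAux.sub_mem' (hXN s) hfs (hISmem _ (hseqmem (P x) n) s))
      have hfe : 2 * (C i + 1) * (ε / (2 * (C i + 1))) = ε := by
        field_simp
      nlinarith [hdiff]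
    choose val hval using hlimex
    have hvalP : ∀ i x, val i (P x) = val i x := by
      intro i x
      have h1 := hval i (P x)
      rw [hPid _ (hPmem x)] at h1
      exact tendsto_nhds_unique h1 (hval i x)
    -- independence of the approximating sequence
    have hindep : ∀ (i : ℕ) (f : X), f ∈ S s → ∀ h' : ℕ → X, (∀ k, h' k ∈ ⋂ t, S t) →
        Tendsto (fun k => N s (f - h' k)) atTop (nhds 0) →
        Tendsto (fun k => g i (h' k)) atTop (nhds (val i f)) := by
      intro i f hf h' hmem hlim
      have hbase := hval i f
      rw [hPid f hf] at hbase
      have hbaselim := hseqlim f hf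
      have hdiffs : Tendsto (fun k => g i (h' k) - g i (hseq f k)) atTop (nhds 0) := by
        apply squeeze_zero_norm
          (a := fun k => C i * (N s (f - h' k) + N s (f - hseq f k)))
        · intro k
          have e : g i (h' k) - g i (hseq f k) = g i (h' k - hseq f k) :=
            (map_sub _ _ _).symm
          rw [Real.norm_eq_abs, e]
          have hmem2 : h' k - hseq f k ∈ ⋂ t, S t :=
            Set.mem_iInter.mpr fun t => FrameAux.sub_mem' (hXN t)
              (hISmem _ (hmem k) t) (hISmem _ (hseqmem f k) t)
          refine le_trans (hC i _ hmem2) (mul_le_mul_of_nonneg_left ?_ (hC0 i))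
          have e2 : h' k - hseq f k = (f - hseq f k) - (f - h' k) := by abel
          rw [e2]
          have := FrameAux.norm_sub_le'' (hXN s)
            (FrameAux.sub_mem' (hXN s) hf (hISmem _ (hseqmem f k) s))
            (FrameAux.sub_mem' (hXN s) hf (hISmem _ (hmem k) s))
          linarith
        · simpa using ((hlim.add hbaselim).const_mul (C i))
      have e3 : (fun k => g i (h' k)) =
          fun k => (g i (h' k) - g i (hseq f k)) + g i (hseq f k) := by
        funext k; ring
      rw [e3]
      simpa using hdiffs.add hbase
    have hseqlim' : ∀ x : X, Tendsto (fun k => N s (P x - hseq (P x) k)) atTop (nhds 0) :=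
      fun x => hseqlim (P x) (hPmem x)
    -- linearity of val
    have haddval : ∀ i (x y : X), val i (x + y) = val i x + val i y := by
      intro i x y
      have hmemsum : ∀ k, (hseq (P x) k + hseq (P y) k) ∈ ⋂ t, S t := fun k =>
        Set.mem_iInter.mpr fun t => FrameAux.add_mem' (hXN t)
          (hISmem _ (hseqmem (P x) k) t) (hISmem _ (hseqmem (P y) k) t)
      have h1 : Tendsto (fun k => g i (hseq (P x) k + hseq (P y) k)) atTop
          (nhds (val i (P x + P y))) := by
        apply hindep i (P x + P y) (FrameAux.add_mem' (hXN s) (hPmem x) (hPmem y))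
          _ hmemsum
        have e : ∀ k, P x + P y - (hseq (P x) k + hseq (P y) k) =
            (P x - hseq (P x) k) + (P y - hseq (P y) k) := by intro k; abel
        apply squeeze_zero (g := fun k => N s (P x - hseq (P x) k) + N s (P y - hseq (P y) k))
        · intro k
          apply FrameAux.nonneg (hXN s)
          rw [e k]
          exact FrameAux.add_mem' (hXN s)
            (FrameAux.sub_mem' (hXN s) (hPmem x) (hISmem _ (hseqmem (P x) k) s))
            (FrameAux.sub_mem' (hXN s) (hPmem y) (hISmem _ (hseqmem (P y) k) s))
        · intro k
          rw [e k]
          exact FrameAux.triangle (hXN s)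
            (FrameAux.sub_mem' (hXN s) (hPmem x) (hISmem _ (hseqmem (P x) k) s))
            (FrameAux.sub_mem' (hXN s) (hPmem y) (hISmem _ (hseqmem (P y) k) s))
        · simpa using (hseqlim' x).add (hseqlim' y)
      have h2 : Tendsto (fun k => g i (hseq (P x) k + hseq (P y) k)) atTop
          (nhds (val i x + val i y)) := by
        have e : ∀ k, g i (hseq (P x) k + hseq (P y) k) =
            g i (hseq (P x) k) + g i (hseq (P y) k) := fun k => map_add _ _ _
        simp only [e]
        exact (hval i x).add (hval i y)
      have h3 := tendsto_nhds_unique h1 h2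
      calc val i (x + y) = val i (P (x + y)) := (hvalP i (x + y)).symm
        _ = val i (P x + P y) := by rw [map_add]
        _ = val i x + val i y := h3
    have hsmulval : ∀ i (a : ℝ) (x : X), val i (a • x) = a * val i x := by
      intro i a x
      have hmems : ∀ k, (a • hseq (P x) k) ∈ ⋂ t, S t := fun k =>
        Set.mem_iInter.mpr fun t => FrameAux.smul_mem' (hXN t) a
          (hISmem _ (hseqmem (P x) k) t)
      have h1 : Tendsto (fun k => g i (a • hseq (P x) k)) atTop
          (nhds (val i (a • P x))) := by
        apply hindep i (a • P x) (FrameAux.smul_mem' (hXN s) a (hPmem x)) _ hmems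
        have e : ∀ k, N s (a • P x - a • hseq (P x) k) =
            |a| * N s (P x - hseq (P x) k) := by
          intro k
          rw [← smul_sub]
          exact FrameAux.norm_smul' (hXN s) a
            (FrameAux.sub_mem' (hXN s) (hPmem x) (hISmem _ (hseqmem (P x) k) s))
        simp only [e]
        simpa using (hseqlim' x).const_mul |a|
      have h2 : Tendsto (fun k => g i (a • hseq (P x) k)) atTop
          (nhds (a * val i x)) := by
        have e : ∀ k, g i (a • hseq (P x) k) = a * g i (hseq (P x) k) := by
          intro k; rw [map_smul, smul_eq_mul]
        simp only [e]
        exact (hval i x).const_mul a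
      have h3 := tendsto_nhds_unique h1 h2
      calc val i (a • x) = val i (P (a • x)) := (hvalP i (a • x)).symm
        _ = val i (a • P x) := by rw [map_smul]
        _ = a * val i x := h3
    have hvalsub : ∀ i (x y : X), val i (x - y) = val i x - val i y := by
      intro i x y
      have e : x - y = x + (-1 : ℝ) • y := by
        rw [neg_one_smul]; abel
      rw [e, haddval, hsmulval]; ring
    -- bound for val on S s
    have hvalbound : ∀ i, ∀ f ∈ S s, |val i f| ≤ C i * N s f := by
      intro i f hf
      have hb := hval i f
      rw [hPid f hf] at hb
      have hbl := hseqlim f hf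
      have hbound : ∀ k, |g i (hseq f k)| ≤ C i * (N s f + N s (f - hseq f k)) := by
        intro k
        refine le_trans (hC i _ (hseqmem f k)) (mul_le_mul_of_nonneg_left ?_ (hC0 i))
        have hh := FrameAux.norm_sub_le'' (hXN s) hf
          (FrameAux.sub_mem' (hXN s) hf (hISmem _ (hseqmem f k) s))
        have e : f - (f - hseq f k) = hseq f k := by abel
        rw [e] at hh
        exact hh
      have hlhs : Tendsto (fun k => |g i (hseq f k)|) atTop (nhds |val i f|) := hb.abs
      have hrhs : Tendsto (fun k => C i * (N s f + N s (f - hseq f k))) atTop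
          (nhds (C i * (N s f + 0))) :=
        ((tendsto_const_nhds (x := N s f)).add hbl).const_mul _
      have := le_of_tendsto_of_tendsto' hlhs hrhs hbound
      simpa using this
    -- val agrees with g on the dense subspace
    have hvalg : ∀ i, ∀ f ∈ ⋂ t, S t, val i f = g i f := by
      intro i f hf
      have h1 : Tendsto (fun _ : ℕ => g i f) atTop (nhds (val i f)) := by
        apply hindep i f (hISmem f hf s) (fun _ => f) (fun _ => hf)
        have : (fun _ : ℕ => N s (f - f)) = fun _ => (0 : ℝ) := by
          funext k; rw [sub_self, FrameAux.norm_zero' (hXN s)]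
        rw [this]
        exact tendsto_const_nhds
      exact tendsto_nhds_unique h1 tendsto_const_nhds
    -- the expansion constant
    set K' := (D s * lam s) * max (B s) 0 with hK'
    have hDl : 0 ≤ D s * lam s := mul_nonneg (hD0 s) (by linarith [hlam s])
    have hK'0 : 0 ≤ K' := mul_nonneg hDl (le_max_right _ _)
    have hRg : ∀ h' ∈ ⋂ t, S t, ∀ n : ℕ,
        N s (∑ i ∈ Finset.range n, g i h' • fv i) ≤ K' * N s h' := by
      intro h' hh' n
      have h1 := hpsum_bound s (fun i => g i h') (hITmem _ (hBessel h' hh').1 s)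
        0 n (Nat.zero_le n)
      rw [Finset.range_zero, Finset.sum_empty, sub_zero, FrameAux.trunc_zero,
        sub_zero] at h1
      have h2 := (hBessel h' hh').2 s
      calc N s (∑ i ∈ Finset.range n, g i h' • fv i)
          ≤ (D s * lam s) * NT s (fun i => g i h') := h1
        _ ≤ (D s * lam s) * (max (B s) 0 * N s h') := by
            refine mul_le_mul_of_nonneg_left ?_ hDl
            calc NT s (fun i => g i h') ≤ B s * N s h' := h2
              _ ≤ max (B s) 0 * N s h' := mul_le_mul_of_nonneg_right
                  (le_max_left _ _) (FrameAux.nonneg (hXN s) (hISmem h' hh' s))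
        _ = K' * N s h' := by rw [hK']; ring
    have hsum_mem : ∀ (w : ℕ → ℝ) (n : ℕ),
        (∑ i ∈ Finset.range n, w i • fv i) ∈ S s := fun w n =>
      FrameAux.sum_mem' (hXN s) (fun i => FrameAux.smul_mem' (hXN s) _ (hfvS i s)) _
    have hRlip : ∀ n : ℕ, ∀ x ∈ S s, N s (∑ i ∈ Finset.range n, val i x • fv i) ≤
        (∑ i ∈ Finset.range n, C i * N s (fv i)) * N s x := by
      intro n x hx
      refine le_trans (FrameAux.norm_sum_le (hXN s)
        (fun i => FrameAux.smul_mem' (hXN s) _ (hfvS i s)) _) ?_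
      rw [Finset.sum_mul]
      refine Finset.sum_le_sum fun i _ => ?_
      rw [FrameAux.norm_smul' (hXN s) _ (hfvS i s)]
      have hfv0 : 0 ≤ N s (fv i) := FrameAux.nonneg (hXN s) (hfvS i s)
      calc |val i x| * N s (fv i) ≤ (C i * N s x) * N s (fv i) :=
            mul_le_mul_of_nonneg_right (hvalbound i x hx) hfv0
        _ = C i * N s (fv i) * N s x := by ring
    -- extension of the partial-sum bound to S s
    have hRext : ∀ n : ℕ, ∀ f ∈ S s,
        N s (∑ i ∈ Finset.range n, val i f • fv i) ≤ K' * N s f := by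
      intro n f hf
      have hbl := hseqlim f hf
      have hkey : ∀ k, N s (∑ i ∈ Finset.range n, val i f • fv i) ≤
          (∑ i ∈ Finset.range n, C i * N s (fv i)) * N s (f - hseq f k) +
          K' * (N s f + N s (f - hseq f k)) := by
        intro k
        have hdmem : f - hseq f k ∈ S s :=
          FrameAux.sub_mem' (hXN s) hf (hISmem _ (hseqmem f k) s)
        have e : (∑ i ∈ Finset.range n, val i f • fv i) =
            (∑ i ∈ Finset.range n, val i (f - hseq f k) • fv i) +
            ∑ i ∈ Finset.range n, g i (hseq f k) • fv i := by
          rw [← Finset.sum_add_distrib]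
          refine Finset.sum_congr rfl fun i _ => ?_
          rw [hvalsub, hvalg i _ (hseqmem f k), ← add_smul]
          ring_nf
        rw [e]
        refine le_trans (FrameAux.triangle (hXN s) (hsum_mem _ n) (hsum_mem _ n))
          (add_le_add ?_ ?_)
        · exact hRlip n _ hdmem
        · refine le_trans (hRg (hseq f k) (hseqmem f k) n)
            (mul_le_mul_of_nonneg_left ?_ hK'0)
          have hh := FrameAux.norm_sub_le'' (hXN s) hf hdmem
          have e2 : f - (f - hseq f k) = hseq f k := by abel
          rw [e2] at hh
          exact hh
      have hrhs : Tendsto (fun k =>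
          (∑ i ∈ Finset.range n, C i * N s (fv i)) * N s (f - hseq f k) +
          K' * (N s f + N s (f - hseq f k))) atTop (nhds (K' * N s f)) := by
        have t1 := hbl.const_mul (∑ i ∈ Finset.range n, C i * N s (fv i))
        have t2 := ((tendsto_const_nhds (x := N s f)).add hbl).const_mul K'
        simpa using t1.add t2
      exact ge_of_tendsto' hrhs hkey
    -- assemble
    refine ⟨fun i =>
      { toAddHom := { toFun := val i, map_add' := haddval i },
        map_smul' := fun a x => by
          simp only [RingHom.id_apply, smul_eq_mul]
          exact hsmulval i a x }, ?_, ?_, ?_⟩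
    · intro i
      exact ⟨C i, fun f hf => hvalbound i f hf⟩
    · intro i f hf
      exact hvalg i f hf
    · intro f hf
      simp only [LinearMap.coe_mk, AddHom.coe_mk]
      rw [Metric.tendsto_atTop]
      intro ε hε
      have hK1 : (0:ℝ) < K' + 1 := by linarith
      have hε' : 0 < ε / (3 * (K' + 1)) := by positivity
      obtain ⟨h', hh', hh'lt⟩ := hXdense s f hf _ hε'
      obtain ⟨M, hM⟩ := (Metric.tendsto_atTop.mp (hexp h' hh' s)) _ hε'
      refine ⟨M, fun n hn => ?_⟩
      have hmemA : (∑ i ∈ Finset.range n, g i h' • fv i) ∈ S s := hsum_mem _ n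
      have hgh : N s (h' - ∑ i ∈ Finset.range n, g i h' • fv i) < ε / (3 * (K' + 1)) := by
        have h0 := hM n hn
        rw [Real.dist_eq, sub_zero, abs_of_nonneg (FrameAux.nonneg (hXN s)
          (FrameAux.sub_mem' (hXN s) (hISmem h' hh' s) hmemA))] at h0
        exact h0
      have e : f - ∑ i ∈ Finset.range n, val i f • fv i =
          (f - h') + (h' - ∑ i ∈ Finset.range n, g i h' • fv i) +
          ∑ i ∈ Finset.range n, val i (h' - f) • fv i := by
        have e1 : ∑ i ∈ Finset.range n, val i (h' - f) • fv i =
            (∑ i ∈ Finset.range n, g i h' • fv i) -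
            ∑ i ∈ Finset.range n, val i f • fv i := by
          rw [← Finset.sum_sub_distrib]
          refine Finset.sum_congr rfl fun i _ => ?_
          rw [hvalsub, hvalg i _ hh', ← sub_smul]
        rw [e1]; abel
      have hb3 : N s (∑ i ∈ Finset.range n, val i (h' - f) • fv i) ≤
          K' * N s (h' - f) :=
        hRext n _ (FrameAux.sub_mem' (hXN s) (hISmem h' hh' s) hf)
      have hrev : N s (h' - f) = N s (f - h') :=
        FrameAux.norm_sub_rev (hXN s) (hISmem h' hh' s) hf
      have hmem1 : f - h' ∈ S s := FrameAux.sub_mem' (hXN s) hf (hISmem h' hh' s)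
      have hmem2 : (h' - ∑ i ∈ Finset.range n, g i h' • fv i) ∈ S s :=
        FrameAux.sub_mem' (hXN s) (hISmem h' hh' s) hmemA
      have hmem3 : (∑ i ∈ Finset.range n, val i (h' - f) • fv i) ∈ S s := hsum_mem _ n
      have htot : N s (f - ∑ i ∈ Finset.range n, val i f • fv i) ≤
          N s (f - h') + N s (h' - ∑ i ∈ Finset.range n, g i h' • fv i) +
          N s (∑ i ∈ Finset.range n, val i (h' - f) • fv i) := by
        rw [e]
        refine le_trans (FrameAux.triangle (hXN s)
          (FrameAux.add_mem' (hXN s) hmem1 hmem2) hmem3) ?_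
        exact add_le_add_left (FrameAux.triangle (hXN s) hmem1 hmem2) _
      rw [Real.dist_eq, sub_zero, abs_of_nonneg (FrameAux.nonneg (hXN s)
        (FrameAux.sub_mem' (hXN s) hf (hsum_mem _ n)))]
      have hfin : K' * N s (h' - f) ≤ K' * (ε / (3 * (K' + 1))) := by
        refine mul_le_mul_of_nonneg_left ?_ hK'0
        rw [hrev]; exact le_of_lt hh'lt
      have hend : 3 * (K' * (ε / (3 * (K' + 1)))) + 3 * (ε / (3 * (K' + 1))) = ε := by
        field_simp
      have ht0 : 0 ≤ K' * (ε / (3 * (K' + 1))) := mul_nonneg hK'0 (le_of_lt hε')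
      linarith [htot, hh'lt, hgh, hb3, hfin, hε']
  constructor
  · -- lower frame inequality
    intro s
    refine ⟨(max (D s * lam s) 1)⁻¹, by positivity, ?_⟩
    intro f hf
    have hgT : (fun i => g i f) ∈ ⋂ t, T t := (hBessel f hf).1
    have h2 := hVfb s _ hgT
    rw [hVfg f hf] at h2
    have h3 : 0 ≤ NT s (fun i => g i f) := FrameAux.nonneg (hTN s) (hITmem _ hgT s)
    have hM : (0:ℝ) < max (D s * lam s) 1 := lt_of_lt_of_le one_pos (le_max_right _ _)
    rw [inv_mul_le_iff₀ hM]
    calc N s f ≤ (D s * lam s) * NT s (fun i => g i f) := h2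
      _ ≤ max (D s * lam s) 1 * NT s (fun i => g i f) :=
          mul_le_mul_of_nonneg_right (le_max_left _ _) h3
  · -- the reconstruction operator
    refine ⟨⟨⟨fun c => Vf (Q c), ?_⟩, ?_⟩, ?_, ?_, ?_⟩
    · intro c d
      show Vf (Q (c + d)) = Vf (Q c) + Vf (Q d)
      rw [map_add]; exact hVfadd _ (hQmem c) _ (hQmem d)
    · intro a c
      show Vf (Q (a • c)) = (RingHom.id ℝ) a • Vf (Q c)
      simp only [RingHom.id_apply]
      rw [map_smul]; exact hVfsmul a _ (hQmem c)
    · intro c hc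
      simp only [LinearMap.coe_mk, AddHom.coe_mk]
      rw [hQid c hc]; exact hVfS c hc
    · intro s
      refine ⟨D s * lam s, fun c hc => ?_⟩
      simp only [LinearMap.coe_mk, AddHom.coe_mk]
      rw [hQid c hc]; exact hVfb s c hc
    · intro f hf
      simp only [LinearMap.coe_mk, AddHom.coe_mk]
      rw [hQid _ (hBessel f hf).1]; exact hVfg f hf
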